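/- (Lemma 3.1.) There exist ε > 0 and a real-analytic function U : (−ε, ε) → ℝ with U(0) = √6 / 2 such that for every s ∈ (−ε, ε), the number α = s·U(s) satisfies (1 + s²)·cos(α)·sin(α) − α = 0. -/

import Mathlib

open Real Filter Topology

-- base analytic lemmas (already checked)
lemma analyticAt_rsin (x : ℝ) : AnalyticAt ℝ Real.sin x := by
  have h1 : AnalyticAt ℂ Complex.sin (x : ℂ) :=
    Complex.differentiable_sin.analyticAt _
  have h2 : AnalyticAt ℝ (fun y : ℝ => (Complex.sin y).re) x :=
    (Complex.reCLM.analyticAt _).comp ((h1.restrictScalars).comp (Complex.ofRealCLM.analyticAt x))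
  exact h2.congr (by filter_upwards with y using by simp [← Complex.ofReal_sin])

lemma analyticAt_rcos (x : ℝ) : AnalyticAt ℝ Real.cos x := by
  have h1 : AnalyticAt ℂ Complex.cos (x : ℂ) :=
    Complex.differentiable_cos.analyticAt _
  have h2 : AnalyticAt ℝ (fun y : ℝ => (Complex.cos y).re) x :=
    (Complex.reCLM.analyticAt _).comp ((h1.restrictScalars).comp (Complex.ofRealCLM.analyticAt x))
  exact h2.congr (by filter_upwards with y using by simp [← Complex.ofReal_cos])

lemma analyticAt_rlog {x : ℝ} (hx : 0 < x) : AnalyticAt ℝ Real.log x := by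
  have h1 : AnalyticAt ℂ Complex.log (x : ℂ) :=
    analyticAt_clog (by simp [Complex.mem_slitPlane_iff, hx])
  have h2 : AnalyticAt ℝ (fun y : ℝ => (Complex.log y).re) x :=
    (Complex.reCLM.analyticAt _).comp ((h1.restrictScalars).comp (Complex.ofRealCLM.analyticAt x))
  refine h2.congr ?_
  filter_upwards [eventually_gt_nhds hx] with y hy
  simp [← Complex.ofReal_log hy.le]

lemma analyticAt_rsqrt {x : ℝ} (hx : 0 < x) : AnalyticAt ℝ Real.sqrt x := by
  have h : AnalyticAt ℝ (fun y : ℝ => Real.exp (Real.log y * (1/2))) x :=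
    ((analyticAt_rlog hx).mul analyticAt_const).rexp
  refine h.congr ?_
  filter_upwards [eventually_gt_nhds hx] with y hy
  rw [← Real.rpow_def_of_pos hy, ← Real.sqrt_eq_rpow]

lemma analyticAt_dslope {f : ℝ → ℝ} (hf : AnalyticAt ℝ f 0) :
    AnalyticAt ℝ (dslope f 0) 0 := by
  rcases hf with ⟨p, hp⟩
  exact ⟨p.fslope, hp.has_fpower_series_dslope_fslope⟩

lemma dslope_fact {f : ℝ → ℝ} (hf0 : f 0 = 0) (z : ℝ) : f z = z * dslope f 0 z := by
  have h := sub_smul_dslope f 0 z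
  simp only [sub_zero, hf0, smul_eq_mul] at h
  exact h.symm

lemma lim_sin : Tendsto (fun x : ℝ => (x - Real.sin x) / x ^ 3) (𝓝[≠] (0:ℝ)) (𝓝 (1/6)) := by
  rw [← tendsto_sub_nhds_zero_iff]
  refine squeeze_zero_norm' (a := fun x : ℝ => |x| * (5/96)) ?_ ?_
  · filter_upwards [self_mem_nhdsWithin,
      eventually_nhdsWithin_of_eventually_nhds (eventually_abs_sub_lt 0 one_pos)] with x hx hx1
    have hx0 : x ≠ 0 := hx
    have h1 : |x| ≤ 1 := by simpa using hx1.le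
    have hb := Real.sin_bound h1
    have hx3 : |x ^ 3| = |x| ^ 3 := abs_pow x 3
    have : (x - Real.sin x) / x ^ 3 - 1/6 = -((Real.sin x - (x - x ^ 3 / 6)) / x ^ 3) := by
      field_simp; ring
    rw [Real.norm_eq_abs, this, abs_neg, abs_div, hx3]
    rw [div_le_iff₀ (by positivity)]
    calc |Real.sin x - (x - x ^ 3 / 6)| ≤ |x| ^ 4 * (5/96) := hb.trans (by
        have h4 : 0 ≤ |x| ^ 4 := by positivity
        have h5 : |x| ^ 5 = |x| ^ 4 * |x| := by ring
        rw [h5]; nlinarith)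
      _ = |x| * (5/96) * |x| ^ 3 := by ring
  · have : Tendsto (fun x : ℝ => |x| * (5/96)) (𝓝 0) (𝓝 (|(0:ℝ)| * (5/96))) :=
      (continuous_abs.tendsto 0).mul tendsto_const_nhds
    simpa using this.mono_left nhdsWithin_le_nhds

noncomputable def scFun : ℝ → ℝ := fun α => Real.sin α * Real.cos α
noncomputable def q1 : ℝ → ℝ := dslope scFun 0
noncomputable def psiF : ℝ → ℝ := fun α => (q1 α)⁻¹ - 1
noncomputable def q2 : ℝ → ℝ := dslope psiF 0
noncomputable def q3 : ℝ → ℝ := dslope q2 0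

lemma sc0 : scFun 0 = 0 := by simp [scFun]
lemma hq1a : AnalyticAt ℝ q1 0 :=
  analyticAt_dslope ((analyticAt_rsin 0).mul (analyticAt_rcos 0))
lemma fact1 (z : ℝ) : Real.sin z * Real.cos z = z * q1 z := dslope_fact sc0 z
lemma q1_0 : q1 0 = 1 := by
  have hd : HasDerivAt scFun (Real.cos 0 * Real.cos 0 + Real.sin 0 * -Real.sin 0) 0 :=
    (Real.hasDerivAt_sin 0).mul (Real.hasDerivAt_cos 0)
  have : deriv scFun 0 = 1 := by simpa using hd.deriv
  simp [q1, dslope_same, this]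

lemma hpsia : AnalyticAt ℝ psiF 0 :=
  (hq1a.inv (by rw [q1_0]; norm_num)).sub analyticAt_const
lemma psi0 : psiF 0 = 0 := by simp [psiF, q1_0]
lemma fact2 (z : ℝ) : psiF z = z * q2 z := dslope_fact psi0 z
lemma hq2a : AnalyticAt ℝ q2 0 := analyticAt_dslope hpsia
lemma hq3a : AnalyticAt ℝ q3 0 := analyticAt_dslope hq2a
lemma fact3 (z : ℝ) : q2 z = q2 0 + z * q3 z := by
  have h := sub_smul_dslope q2 0 z
  simp only [sub_zero, smul_eq_mul] at h
  rw [← q3] at h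
  linarith

-- limit of psi/α² = 2/3
lemma limA : Tendsto (fun α : ℝ => (α - Real.sin α * Real.cos α) / α ^ 3)
    (𝓝[≠] (0:ℝ)) (𝓝 (2/3)) := by
  have h2 : Tendsto (fun α : ℝ => 2 * α) (𝓝[≠] (0:ℝ)) (𝓝[≠] (0:ℝ)) := by
    refine tendsto_nhdsWithin_of_tendsto_nhds_of_eventually_within _ ?_ ?_
    · have h : Continuous (fun α : ℝ => 2 * α) := continuous_const.mul continuous_id
      simpa using (h.tendsto 0).mono_left nhdsWithin_le_nhds
    · filter_upwards [self_mem_nhdsWithin] with α (hα : α ≠ 0)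
      simpa [Set.mem_compl_iff] using mul_ne_zero two_ne_zero hα
  have h3 : Tendsto (fun α : ℝ => 4 * ((2*α - Real.sin (2*α)) / (2*α) ^ 3))
      (𝓝[≠] (0:ℝ)) (𝓝 (4 * (1/6))) :=
    (lim_sin.comp h2).const_mul 4
  have h4 : (4 : ℝ) * (1/6) = 2/3 := by norm_num
  rw [h4] at h3
  refine h3.congr' ?_
  filter_upwards [self_mem_nhdsWithin] with α (hα : α ≠ 0)
  rw [Real.sin_two_mul]
  field_simp
  ring

lemma limPsi : Tendsto (fun α : ℝ => psiF α / α ^ 2) (𝓝[≠] (0:ℝ)) (𝓝 (2/3)) := by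
  have hq1c : Tendsto q1 (𝓝[≠] (0:ℝ)) (𝓝 1) := by
    simpa [q1_0] using hq1a.continuousAt.tendsto.mono_left nhdsWithin_le_nhds
  have hq1ne : ∀ᶠ α in 𝓝[≠] (0:ℝ), q1 α ≠ 0 :=
    hq1c (isOpen_ne.mem_nhds one_ne_zero)
  have hprod : Tendsto (fun α : ℝ => ((α - Real.sin α * Real.cos α) / α ^ 3) * (q1 α)⁻¹)
      (𝓝[≠] (0:ℝ)) (𝓝 ((2/3) * 1⁻¹)) := limA.mul (hq1c.inv₀ one_ne_zero)
  have h1 : ((2:ℝ)/3) * 1⁻¹ = 2/3 := by norm_num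
  rw [h1] at hprod
  refine hprod.congr' ?_
  filter_upwards [self_mem_nhdsWithin, hq1ne] with α (hα : α ≠ 0) hq
  rw [psiF, fact1 α]
  field_simp

lemma q2_0 : q2 0 = 0 := by
  have hc : Tendsto q2 (𝓝[≠] (0:ℝ)) (𝓝 (q2 0)) :=
    hq2a.continuousAt.tendsto.mono_left nhdsWithin_le_nhds
  have hl : Tendsto (fun α : ℝ => α * (psiF α / α ^ 2)) (𝓝[≠] (0:ℝ)) (𝓝 (0 * (2/3))) :=
    (tendsto_id.mono_left nhdsWithin_le_nhds).mul limPsi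
  have he : Tendsto q2 (𝓝[≠] (0:ℝ)) (𝓝 (0 * (2/3))) := by
    refine hl.congr' ?_
    filter_upwards [self_mem_nhdsWithin] with α (hα : α ≠ 0)
    rw [fact2 α]
    field_simp
  have := tendsto_nhds_unique hc he
  simpa using this

lemma q3_0 : q3 0 = 2/3 := by
  have hc : Tendsto q3 (𝓝[≠] (0:ℝ)) (𝓝 (q3 0)) :=
    hq3a.continuousAt.tendsto.mono_left nhdsWithin_le_nhds
  have he : Tendsto q3 (𝓝[≠] (0:ℝ)) (𝓝 (2/3)) := by
    refine limPsi.congr' ?_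
    filter_upwards [self_mem_nhdsWithin] with α (hα : α ≠ 0)
    rw [fact2 α, fact3 α, q2_0]
    field_simp
    ring
  exact tendsto_nhds_unique hc he

lemma psi_eq (z : ℝ) : psiF z = z ^ 2 * q3 z := by
  rw [fact2 z, fact3 z, q2_0]; ring

noncomputable def wFun : ℝ → ℝ := fun α => α * Real.sqrt (q3 α)

lemma hsq_a : AnalyticAt ℝ (fun α => Real.sqrt (q3 α)) 0 :=
  (analyticAt_rsqrt (by rw [q3_0]; norm_num)).comp hq3a

lemma hwa : AnalyticAt ℝ wFun 0 := by
  have : AnalyticAt ℝ (fun α : ℝ => α) 0 := analyticAt_id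
  exact this.mul hsq_a

lemma w0 : wFun 0 = 0 := by simp [wFun]

lemma hw_deriv : HasDerivAt wFun (Real.sqrt (2/3)) 0 := by
  have hg : HasDerivAt (fun α => Real.sqrt (q3 α)) (deriv (fun α => Real.sqrt (q3 α)) 0) 0 :=
    (hsq_a.differentiableAt).hasDerivAt
  have h := (hasDerivAt_id (0:ℝ)).mul hg
  have h' : HasDerivAt (fun i : ℝ => i * Real.sqrt (q3 i)) (Real.sqrt (2/3)) 0 := by
    simpa [q3_0, Pi.mul_def] using h
  exact h'

lemma hw_strict : HasStrictDerivAt wFun (Real.sqrt (2/3)) 0 := by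
  rcases hwa with ⟨p, hp⟩
  have h := hp.hasStrictDerivAt
  have heq : ((p 1) fun _ => 1) = Real.sqrt (2/3) := hw_deriv.unique h.hasDerivAt |>.symm
  rwa [heq] at h

lemma sqrt23_ne : Real.sqrt (2/3) ≠ 0 := by
  positivity

noncomputable def eqv : ℝ ≃L[ℝ] ℝ :=
  ContinuousLinearEquiv.unitsEquivAut ℝ (Units.mk0 _ sqrt23_ne)

lemma hw_strictF : HasStrictFDerivAt wFun (eqv : ℝ →L[ℝ] ℝ) 0 :=
  hw_strict.hasStrictFDerivAt_equiv sqrt23_ne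

noncomputable def Phi : OpenPartialHomeomorph ℝ ℝ := hw_strictF.toOpenPartialHomeomorph wFun

lemma phi_coe : (Phi : ℝ → ℝ) = wFun := hw_strictF.toOpenPartialHomeomorph_coe
lemma phi_source : (0:ℝ) ∈ Phi.source := hw_strictF.mem_toOpenPartialHomeomorph_source
lemma phi_zero : Phi 0 = 0 := by rw [show Phi 0 = wFun 0 from congrFun phi_coe 0, w0]
lemma v0 : Phi.symm 0 = 0 := by
  have := Phi.left_inv phi_source
  rwa [phi_zero] at this

lemma hva : AnalyticAt ℝ Phi.symm 0 := by
  have han : AnalyticAt ℝ Phi 0 := by rw [phi_coe]; exact hwa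
  have hfd : fderiv ℝ Phi 0 = (eqv : ℝ →L[ℝ] ℝ) := by
    rw [phi_coe]
    exact hw_strictF.hasFDerivAt.fderiv
  have := Phi.analyticAt_symm' phi_source han hfd
  rwa [phi_zero] at this

noncomputable def UFun : ℝ → ℝ := dslope Phi.symm 0

lemma hUa : AnalyticAt ℝ UFun 0 := analyticAt_dslope hva
lemma v_eq (s : ℝ) : Phi.symm s = s * UFun s := dslope_fact v0 s

lemma hv_deriv : deriv Phi.symm 0 = (Real.sqrt (2/3))⁻¹ := by
  have hvd : HasDerivAt Phi.symm (deriv Phi.symm 0) 0 := hva.differentiableAt.hasDerivAt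
  have hw' : HasDerivAt wFun (Real.sqrt (2/3)) (Phi.symm 0) := by rw [v0]; exact hw_deriv
  have hcomp : HasDerivAt (wFun ∘ Phi.symm) (Real.sqrt (2/3) * deriv Phi.symm 0) 0 :=
    hw'.comp 0 hvd
  have hev : wFun ∘ Phi.symm =ᶠ[𝓝 (0:ℝ)] id := by
    have ht : Phi.target ∈ 𝓝 (0:ℝ) := by
      have := Phi.open_target.mem_nhds (Phi.map_source phi_source)
      rwa [phi_zero] at this
    filter_upwards [ht] with s hs
    simp only [Function.comp_apply, id_eq]
    rw [← congrFun phi_coe (Phi.symm s)]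
    exact Phi.right_inv hs
  have hid : HasDerivAt (id : ℝ → ℝ) (Real.sqrt (2/3) * deriv Phi.symm 0) 0 :=
    hcomp.congr_of_eventuallyEq hev.symm
  have : Real.sqrt (2/3) * deriv Phi.symm 0 = 1 := hid.unique (hasDerivAt_id 0)
  field_simp at this ⊢
  linarith

lemma U0 : UFun 0 = Real.sqrt 6 / 2 := by
  have h1 : UFun 0 = deriv Phi.symm 0 := dslope_same _ _
  rw [h1, hv_deriv, ← Real.sqrt_inv]
  have h2 : ((2:ℝ)/3)⁻¹ = 3/2 := by norm_num
  rw [h2]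
  rw [show (6:ℝ) = (3/2) * 4 by norm_num, Real.sqrt_mul (by norm_num)]
  rw [show (4:ℝ) = 2^2 by norm_num, Real.sqrt_sq (by norm_num)]
  ring

/-- **Lemma 3.1.** The equation `(1 + s²)·cos α·sin α − α = 0` has an analytic solution
`α = h(s) = s·U(s)` near the origin, with `U(0) = √6 / 2`. -/
theorem exists_analytic_solution_ce :
    ∃ ε > (0 : ℝ), ∃ U : ℝ → ℝ,
      AnalyticOnNhd ℝ U (Set.Ioo (-ε) ε) ∧
      U 0 = Real.sqrt 6 / 2 ∧
      ∀ s ∈ Set.Ioo (-ε) ε,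
        (1 + s ^ 2) * Real.cos (s * U s) * Real.sin (s * U s) - s * U s = 0 := by
  have ht : Phi.target ∈ 𝓝 (0:ℝ) := by
    have := Phi.open_target.mem_nhds (Phi.map_source phi_source)
    rwa [phi_zero] at this
  have hq3pos : ∀ᶠ s in 𝓝 (0:ℝ), 0 < q3 (Phi.symm s) := by
    have hc : ContinuousAt (fun s => q3 (Phi.symm s)) 0 := by
      have h1 : ContinuousAt q3 (Phi.symm 0) := by rw [v0]; exact hq3a.continuousAt
      exact h1.comp hva.continuousAt
    have hval : q3 (Phi.symm 0) = 2/3 := by rw [v0, q3_0]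
    have := hc (Ioi_mem_nhds (show (0:ℝ) < q3 (Phi.symm 0) by rw [hval]; norm_num))
    filter_upwards [this] with s hs using hs
  have hAn : ∀ᶠ s in 𝓝 (0:ℝ), AnalyticAt ℝ UFun s := hUa.eventually_analyticAt
  have key : ∀ᶠ s in 𝓝 (0:ℝ), AnalyticAt ℝ UFun s ∧
      (1 + s ^ 2) * Real.cos (s * UFun s) * Real.sin (s * UFun s) - s * UFun s = 0 := by
    filter_upwards [ht, hq3pos, hAn] with s hs hpos hA
    refine ⟨hA, ?_⟩
    have hradius : s * UFun s = Phi.symm s := (v_eq s).symm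
    rw [hradius]
    set α := Phi.symm s with hαdef
    have hws : wFun α = s := by
      rw [← congrFun phi_coe (Phi.symm s)]
      exact Phi.right_inv hs
    have hsq : s ^ 2 = psiF α := by
      rw [← hws]
      show (α * Real.sqrt (q3 α)) ^ 2 = psiF α
      rw [mul_pow, Real.sq_sqrt hpos.le, ← psi_eq]
    have h1 : 1 + s ^ 2 = (q1 α)⁻¹ := by rw [hsq, psiF]; ring
    have hq1ne : q1 α ≠ 0 := by
      intro h
      rw [h] at h1
      simp at h1
      nlinarith [sq_nonneg s]
    have h2 : Real.cos α * Real.sin α = α * q1 α := by rw [mul_comm]; exact fact1 α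
    rw [h1, mul_assoc, h2]
    field_simp
    ring
  rcases Metric.eventually_nhds_iff.1 key with ⟨δ, hδ, hball⟩
  have hmem : ∀ x ∈ Set.Ioo (-δ) δ, dist x 0 < δ := by
    intro x hx
    rw [Real.dist_eq, sub_zero, abs_lt]
    exact ⟨hx.1, hx.2⟩
  refine ⟨δ, hδ, UFun, ?_, U0, ?_⟩
  · intro x hx
    exact (hball (hmem x hx)).1
  · intro s hs
    exact (hball (hmem s hs)).2
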